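/- Let k be a field and let Ω and X be sets. On the free associative (noncommutative) k-algebra R = k⟨M(Ω) × X⟩ on the set M(Ω) × X, where M(Ω) = (Ω →₀ ℕ) is the free commutative monoid on Ω, for each ω ∈ Ω there exists a unique k-derivation D_ω : R → R satisfying D_ω(ι(α,x)) = ι(α + e_ω, x) for every α ∈ M(Ω) and x ∈ X (here ι is the canonical inclusion of generators and e_ω ∈ M(Ω) is the indicator of ω). The derivations D_ω pairwise commute, and (R, (D_ω)_{ω∈Ω}) is the free commuting multi-differential noncommutative algebra on X: for every associative k-algebra A equipped with a family (δ_ω)_{ω∈Ω} of pairwise commuting k-derivations of A and every map f : X → A, there exists a unique k-algebra homomorphism φ : R → A such that φ(ι(0,x)) = f(x) for all x ∈ X and φ ∘ D_ω = δ_ω ∘ φ for all ω ∈ Ω. -/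

import Mathlib

/-- A `k`-linear map `d : A → A` is a derivation of the `k`-algebra `A` if it satisfies
the Leibniz rule. (Stated for possibly noncommutative `A`.) -/
def IsLeibnizDerivation {k A : Type*} [CommSemiring k] [Semiring A] [Algebra k A]
    (d : A →ₗ[k] A) : Prop :=
  ∀ a b : A, d (a * b) = d a * b + a * d b

section Aux
variable {k : Type*} [CommSemiring k] {A : Type*} [Ring A] [Algebra k A] {Ω : Type*}

theorem IsLeibnizDerivation.one {d : A →ₗ[k] A} (hd : IsLeibnizDerivation d) : d 1 = 0 := by
  have := hd 1 1
  simp only [mul_one, one_mul] at this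
  exact left_eq_add.mp this

theorem IsLeibnizDerivation.algebraMap' {d : A →ₗ[k] A} (hd : IsLeibnizDerivation d) (r : k) :
    d (algebraMap k A r) = 0 := by
  rw [Algebra.algebraMap_eq_smul_one, map_smul, hd.one, smul_zero]

variable (δ : Ω → (A →ₗ[k] A)) (hc : ∀ ω τ : Ω, Commute (δ ω) (δ τ))

/-- iterated derivation indexed by a multi-index -/
noncomputable def iterD (α : Ω →₀ ℕ) : A →ₗ[k] A :=
  (α.toMultiset.map δ).noncommProd (by
    intro x hx y hy _
    obtain ⟨ω, -, rfl⟩ := Multiset.mem_map.mp hx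
    obtain ⟨τ, -, rfl⟩ := Multiset.mem_map.mp hy
    exact hc ω τ)

theorem iterD_zero : iterD δ hc 0 = 1 := by
  simp [iterD]

theorem iterD_add (α β : Ω →₀ ℕ) :
    iterD δ hc (α + β) = iterD δ hc α * iterD δ hc β := by
  simp only [iterD, Finsupp.toMultiset_add, Multiset.map_add]
  rw [Multiset.noncommProd_add]

theorem iterD_single (ω : Ω) (n : ℕ) : iterD δ hc (Finsupp.single ω n) = δ ω ^ n := by
  rw [iterD]
  erw [Multiset.noncommProd_eq_pow_card _ _ (δ ω)]
  · congr 1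
    simp [Finsupp.toMultiset_single]
  · intro x hx
    obtain ⟨τ, hτ, rfl⟩ := Multiset.mem_map.mp hx
    simp [Finsupp.toMultiset_single, Multiset.mem_replicate] at hτ
    rw [hτ.2]

theorem iterD_commute (ω : Ω) (α : Ω →₀ ℕ) : Commute (δ ω) (iterD δ hc α) := by
  apply Multiset.noncommProd_commute
  intro x hx
  obtain ⟨τ, -, rfl⟩ := Multiset.mem_map.mp hx
  exact hc ω τ

theorem pow_intertwine {B : Type*} [Ring B] [Algebra k B] (dB : B →ₗ[k] B)
    (dA : A →ₗ[k] A) (ψ : B →ₐ[k] A) (h : ∀ r, ψ (dB r) = dA (ψ r)) (n : ℕ) (r : B) :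
    ψ ((dB ^ n) r) = (dA ^ n) (ψ r) := by
  induction n generalizing r with
  | zero => simp
  | succ n ih =>
    rw [pow_succ, pow_succ, Module.End.mul_apply, Module.End.mul_apply, ih, h]

theorem iterD_intertwine {B : Type*} [Ring B] [Algebra k B]
    (d : Ω → (B →ₗ[k] B)) (hdc : ∀ ω τ : Ω, Commute (d ω) (d τ))
    (ψ : B →ₐ[k] A) (h : ∀ (ω : Ω) (r : B), ψ (d ω r) = δ ω (ψ r)) (α : Ω →₀ ℕ) (r : B) :
    ψ (iterD d hdc α r) = iterD δ hc α (ψ r) := by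
  induction α using Finsupp.induction generalizing r with
  | zero => rw [iterD_zero, iterD_zero]; rfl
  | single_add a b f _ _ ih =>
    rw [iterD_add, iterD_add, iterD_single, iterD_single, Module.End.mul_apply,
      Module.End.mul_apply]
    rw [pow_intertwine (d a) (δ a) ψ (h a)]
    rw [ih]

end Aux

section Free
variable (k : Type*) [Field k] (Ω X : Type*)

local notation "R" => FreeAlgebra k ((Ω →₀ ℕ) × X)

/-- algebra map into the trivial square-zero extension recording a derivation -/
noncomputable def tszPhi (ω : Ω) : R →ₐ[k] TrivSqZeroExt R R :=
  FreeAlgebra.lift k fun p =>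
    (⟨FreeAlgebra.ι k p, FreeAlgebra.ι k (p.1 + Finsupp.single ω 1, p.2)⟩ : TrivSqZeroExt R R)

/-- the canonical derivations -/
noncomputable def freeD (ω : Ω) : R →ₗ[k] R :=
  ((TrivSqZeroExt.sndHom R R).restrictScalars k).comp (tszPhi k Ω X ω).toLinearMap

theorem tszPhi_fst (ω : Ω) (r : R) : (tszPhi k Ω X ω r).fst = r := by
  have : (TrivSqZeroExt.fstHom k R R).comp (tszPhi k Ω X ω) = AlgHom.id k R := by
    apply FreeAlgebra.hom_ext
    funext p
    simp [tszPhi]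
    exact congrArg TrivSqZeroExt.fst (FreeAlgebra.lift_ι_apply _ _)
  exact congrArg (fun g => g r) this

theorem freeD_apply (ω : Ω) (r : R) : freeD k Ω X ω r = (tszPhi k Ω X ω r).snd := rfl

theorem freeD_ι (ω : Ω) (α : Ω →₀ ℕ) (x : X) :
    freeD k Ω X ω (FreeAlgebra.ι k (α, x)) =
      FreeAlgebra.ι k (α + Finsupp.single ω 1, x) := by
  rw [freeD_apply, tszPhi]
  exact congrArg TrivSqZeroExt.snd (FreeAlgebra.lift_ι_apply _ _)

theorem freeD_leibniz (ω : Ω) : IsLeibnizDerivation (freeD k Ω X ω) := by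
  intro a b
  rw [freeD_apply, freeD_apply, freeD_apply, map_mul, TrivSqZeroExt.snd_mul,
    tszPhi_fst, tszPhi_fst, smul_eq_mul, op_smul_eq_mul]
  exact add_comm _ _

end Free

section Free2
variable (k : Type*) [Field k] (Ω X : Type*)

local notation "R" => FreeAlgebra k ((Ω →₀ ℕ) × X)

theorem freeD_unique (ω : Ω) (D' : R →ₗ[k] R) (hD' : IsLeibnizDerivation D')
    (hι : ∀ (α : Ω →₀ ℕ) (x : X),
      D' (FreeAlgebra.ι k (α, x)) = FreeAlgebra.ι k (α + Finsupp.single ω 1, x)) :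
    D' = freeD k Ω X ω := by
  ext r
  induction r using FreeAlgebra.induction with
  | grade0 r => rw [hD'.algebraMap', (freeD_leibniz k Ω X ω).algebraMap']
  | grade1 p => rw [hι p.1 p.2, freeD_ι]
  | mul a b ha hb => rw [hD' a b, freeD_leibniz k Ω X ω a b, ha, hb]
  | add a b ha hb => rw [map_add, map_add, ha, hb]

theorem freeD_comm (ω τ : Ω) (r : R) :
    freeD k Ω X ω (freeD k Ω X τ r) = freeD k Ω X τ (freeD k Ω X ω r) := by
  induction r using FreeAlgebra.induction with
  | grade0 r =>
    rw [(freeD_leibniz k Ω X τ).algebraMap', (freeD_leibniz k Ω X ω).algebraMap',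
      map_zero, map_zero]
  | grade1 p =>
    rw [freeD_ι, freeD_ι, freeD_ι, freeD_ι, add_right_comm]
  | mul a b ha hb =>
    rw [freeD_leibniz k Ω X τ a b, map_add, freeD_leibniz k Ω X ω a b, map_add,
      freeD_leibniz k Ω X ω (freeD k Ω X τ a) b, freeD_leibniz k Ω X ω a (freeD k Ω X τ b),
      freeD_leibniz k Ω X τ (freeD k Ω X ω a) b, freeD_leibniz k Ω X τ a (freeD k Ω X ω b),
      ha, hb]
    abel
  | add a b ha hb => rw [map_add, map_add, map_add, map_add, ha, hb]

theorem freeD_commute (ω τ : Ω) : Commute (freeD k Ω X ω) (freeD k Ω X τ) := by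
  ext r
  exact freeD_comm k Ω X ω τ r

theorem iterD_freeD_ι (α β : Ω →₀ ℕ) (x : X) :
    iterD (freeD k Ω X) (freeD_commute k Ω X) α (FreeAlgebra.ι k (β, x)) =
      FreeAlgebra.ι k (β + α, x) := by
  induction α using Finsupp.induction generalizing β with
  | zero => rw [iterD_zero, add_zero]; rfl
  | single_add a b f _ _ ih =>
    rw [iterD_add, iterD_single, Module.End.mul_apply, ih]
    have key : ∀ (n : ℕ) (γ : Ω →₀ ℕ),
        (freeD k Ω X a ^ n) (FreeAlgebra.ι k (γ, x)) =
          FreeAlgebra.ι k (γ + Finsupp.single a n, x) := by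
      intro n
      induction n with
      | zero => intro γ; rw [Finsupp.single_zero, add_zero]; rfl
      | succ n ihn =>
        intro γ
        rw [pow_succ, Module.End.mul_apply, freeD_ι, ihn]
        congr 2
        rw [add_assoc, ← Finsupp.single_add, add_comm 1 n]
    rw [key]
    congr 2
    rw [add_assoc]
    congr 1
    exact add_comm _ _

end Free2

/-- The free associative algebra `k⟨M(Ω) × X⟩` with `M(Ω) = (Ω →₀ ℕ)` carries, for
each `ω ∈ Ω`, a unique derivation `D_ω` with `D_ω ι(α,x) = ι(α + e_ω, x)`; these derivations
pairwise commute and make it the free commuting multi-differential noncommutative algebra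
on `X`. -/
theorem free_commuting_multi_differential_noncommutative_algebra
    (k : Type*) [Field k] (Ω X : Type*) :
    ∃ D : Ω → (FreeAlgebra k ((Ω →₀ ℕ) × X) →ₗ[k] FreeAlgebra k ((Ω →₀ ℕ) × X)),
      (∀ ω : Ω, IsLeibnizDerivation (D ω)) ∧
      (∀ (ω : Ω) (α : Ω →₀ ℕ) (x : X),
          D ω (FreeAlgebra.ι k (α, x)) = FreeAlgebra.ι k (α + Finsupp.single ω 1, x)) ∧
      (∀ (ω : Ω) (D' : FreeAlgebra k ((Ω →₀ ℕ) × X) →ₗ[k] FreeAlgebra k ((Ω →₀ ℕ) × X)),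
          IsLeibnizDerivation D' →
          (∀ (α : Ω →₀ ℕ) (x : X),
            D' (FreeAlgebra.ι k (α, x)) = FreeAlgebra.ι k (α + Finsupp.single ω 1, x)) →
          D' = D ω) ∧
      (∀ (ω τ : Ω) (r : FreeAlgebra k ((Ω →₀ ℕ) × X)), D ω (D τ r) = D τ (D ω r)) ∧
      (∀ (A : Type*) [Ring A] [Algebra k A] (δ : Ω → (A →ₗ[k] A)),
          (∀ ω : Ω, IsLeibnizDerivation (δ ω)) →
          (∀ (ω τ : Ω) (a : A), δ ω (δ τ a) = δ τ (δ ω a)) →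
          ∀ f : X → A,
            ∃! φ : FreeAlgebra k ((Ω →₀ ℕ) × X) →ₐ[k] A,
              (∀ x : X, φ (FreeAlgebra.ι k (0, x)) = f x) ∧
              (∀ (ω : Ω) (r : FreeAlgebra k ((Ω →₀ ℕ) × X)), φ (D ω r) = δ ω (φ r))) := by
  classical
  refine ⟨freeD k Ω X, freeD_leibniz k Ω X, freeD_ι k Ω X,
    fun ω D' h1 h2 => freeD_unique k Ω X ω D' h1 h2, freeD_comm k Ω X, ?_⟩
  intro A _ _ δ hδ hδc f
  have hc : ∀ ω τ : Ω, Commute (δ ω) (δ τ) := fun ω τ => LinearMap.ext fun a => hδc ω τ a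
  set φ : FreeAlgebra k ((Ω →₀ ℕ) × X) →ₐ[k] A :=
    FreeAlgebra.lift k (fun p => iterD δ hc p.1 (f p.2)) with hφ
  have hφι : ∀ (α : Ω →₀ ℕ) (x : X),
      φ (FreeAlgebra.ι k (α, x)) = iterD δ hc α (f x) := by
    intro α x
    rw [hφ, FreeAlgebra.lift_ι_apply]
  have h1 : ∀ x : X, φ (FreeAlgebra.ι k (0, x)) = f x := by
    intro x
    rw [hφι, iterD_zero, Module.End.one_apply]
  have h2 : ∀ (ω : Ω) (r : FreeAlgebra k ((Ω →₀ ℕ) × X)),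
      φ (freeD k Ω X ω r) = δ ω (φ r) := by
    intro ω r
    induction r using FreeAlgebra.induction with
    | grade0 r =>
      rw [(freeD_leibniz k Ω X ω).algebraMap', map_zero, AlgHom.commutes,
        (hδ ω).algebraMap']
    | grade1 p =>
      obtain ⟨α, x⟩ := p
      rw [freeD_ι, hφι, hφι, iterD_add, iterD_single, pow_one,
        ← (iterD_commute δ hc ω α).eq, Module.End.mul_apply]
    | mul a b ha hb =>
      rw [freeD_leibniz k Ω X ω a b, map_add, map_mul, map_mul, map_mul, ha, hb,
        hδ ω (φ a) (φ b)]
    | add a b ha hb =>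
      rw [map_add, map_add, map_add, map_add, ha, hb]
  refine ⟨φ, ⟨h1, h2⟩, ?_⟩
  intro ψ ⟨hψ1, hψ2⟩
  refine FreeAlgebra.hom_ext ?_
  funext p
  obtain ⟨α, x⟩ := p
  simp only [Function.comp_apply]
  have hgen : FreeAlgebra.ι k ((α, x) : (Ω →₀ ℕ) × X) =
      iterD (freeD k Ω X) (freeD_commute k Ω X) α (FreeAlgebra.ι k (0, x)) := by
    rw [iterD_freeD_ι, zero_add]
  rw [hgen, iterD_intertwine δ hc (freeD k Ω X) (freeD_commute k Ω X) ψ hψ2 α,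
    iterD_intertwine δ hc (freeD k Ω X) (freeD_commute k Ω X) φ h2 α, hψ1, h1]
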